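/- Let k be the field with two elements and R' = k[X1,X2,X3]. For 1 ≤ i < j ≤ 3, let R''_{ij} be the subring of the localization of R' at (X1+X2)(X1+X3)(X2+X3) obtained by inverting the two elements X_i+X_k and X_j+X_k (where k is the remaining index), but not X_i+X_j. Then R' equals the intersection R''_{12} ∩ R''_{13} ∩ R''_{23} inside the full localization. -/

import Mathlib

set_option maxHeartbeats 1000000


noncomputable section
open MvPolynomial

abbrev Rp : Type := MvPolynomial (Fin 3) (ZMod 2)
abbrev K : Type := FractionRing Rp

def xk (i : Fin 3) : K := algebraMap Rp K (X i)

namespace StmtAux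

instance : CharP Rp 2 := charP_of_injective_algebraMap' (ZMod 2) (A := Rp) 2

lemma prime_X0 : Prime (X 0 : Rp) := by
  rw [← MulEquiv.prime_iff (MvPolynomial.finSuccEquiv (ZMod 2) 2).toMulEquiv]
  have h : (MvPolynomial.finSuccEquiv (ZMod 2) 2).toMulEquiv (X 0 : Rp) = Polynomial.X :=
    MvPolynomial.finSuccEquiv_X_zero
  rw [h]
  exact Polynomial.prime_X

lemma prime_X (i : Fin 3) : Prime (X i : Rp) := by
  have h := prime_X0
  rw [← MulEquiv.prime_iff (MvPolynomial.renameEquiv (ZMod 2) (Equiv.swap 0 i)).toMulEquiv] at h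
  simpa using h

/-- The substitution `X i ↦ X i + X j` as an algebra hom. -/
def tr (i j : Fin 3) : Rp →ₐ[ZMod 2] Rp :=
  aeval (Function.update X i (X i + X j))

lemma tr_invol (i j : Fin 3) (hij : j ≠ i) : (tr i j).comp (tr i j) = AlgHom.id _ _ := by
  apply MvPolynomial.algHom_ext
  intro l
  by_cases hl : l = i
  · subst hl
    simp only [tr, AlgHom.comp_apply, aeval_X, AlgHom.id_apply, Function.update_self,
      map_add, Function.update_of_ne hij]
    rw [add_assoc, CharTwo.add_self_eq_zero, add_zero]
  · simp [tr, AlgHom.comp_apply, aeval_X, Function.update_of_ne hl]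

/-- The substitution `X i ↦ X i + X j` as an algebra equivalence. -/
def trE (i j : Fin 3) (hij : j ≠ i) : Rp ≃ₐ[ZMod 2] Rp :=
  AlgEquiv.ofAlgHom (tr i j) (tr i j) (tr_invol i j hij) (tr_invol i j hij)

lemma prime_sum (i j : Fin 3) (hij : j ≠ i) : Prime (X i + X j : Rp) := by
  have h := prime_X i
  rw [← MulEquiv.prime_iff (trE i j hij).toMulEquiv] at h
  simpa [trE, tr] using h

lemma not_dvd {a b : Rp} (v : Fin 3 → ZMod 2) (ha : eval v a = 0) (hb : eval v b ≠ 0) :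
    ¬ a ∣ b := by
  rintro ⟨t, rfl⟩
  exact hb (by rw [map_mul, ha, zero_mul])

abbrev P : Rp := X 0 + X 1
abbrev Q : Rp := X 0 + X 2
abbrev Rr : Rp := X 1 + X 2

lemma primeP : Prime P := prime_sum 0 1 (by decide)
lemma primeQ : Prime Q := prime_sum 0 2 (by decide)
lemma primeR : Prime Rr := prime_sum 1 2 (by decide)

lemma Q_not_dvd_P : ¬ Q ∣ P :=
  not_dvd ![0, 1, 0] (by simp) (by simp)

lemma Q_not_dvd_R : ¬ Q ∣ Rr :=
  not_dvd ![0, 1, 0] (by simp) (by simp)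

lemma R_not_dvd_P : ¬ Rr ∣ P :=
  not_dvd ![1, 0, 0] (by simp) (by simp)

lemma R_not_dvd_Q : ¬ Rr ∣ Q :=
  not_dvd ![1, 0, 0] (by simp) (by simp)

/-- The image of `Rp` in `K`. -/
abbrev φ : Rp →+* K := algebraMap Rp K

lemma φ_inj : Function.Injective φ := IsFractionRing.injective Rp K

/-- The subring of elements of the form `f / aⁿ`. -/
def S (a : Rp) : Subring K where
  carrier := {x | ∃ (n : ℕ) (f : Rp), x * (φ a) ^ n = φ f}
  one_mem' := ⟨0, 1, by simp⟩
  zero_mem' := ⟨0, 0, by simp⟩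
  add_mem' := by
    rintro x y ⟨n, f, hf⟩ ⟨m, g, hg⟩
    refine ⟨n + m, f * a ^ m + g * a ^ n, ?_⟩
    rw [map_add, map_mul, map_mul, map_pow, map_pow, ← hf, ← hg]
    ring
  neg_mem' := by
    rintro x ⟨n, f, hf⟩
    exact ⟨n, -f, by rw [map_neg, ← hf]; ring⟩
  mul_mem' := by
    rintro x y ⟨n, f, hf⟩ ⟨m, g, hg⟩
    refine ⟨n + m, f * g, ?_⟩
    rw [map_mul, ← hf, ← hg]
    ring

lemma mem_S {a : Rp} {x : K} (h : x ∈ S a) : ∃ (n : ℕ) (f : Rp), x * (φ a) ^ n = φ f := h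

lemma inv_mem_S {a b : Rp} (hb : b ≠ 0) (hdvd : b ∣ a) : (φ b)⁻¹ ∈ S a := by
  obtain ⟨c, rfl⟩ := hdvd
  refine ⟨1, c, ?_⟩
  have hb' : φ b ≠ 0 := fun h => hb (φ_inj (by simpa using h))
  rw [pow_one, map_mul, ← mul_assoc, inv_mul_cancel₀ hb', one_mul]

lemma closure_le_S (a b : Rp) (ha : a ≠ 0) (hb : b ≠ 0) :
    Subring.closure (Set.range (algebraMap Rp K) ∪ {(φ a)⁻¹, (φ b)⁻¹}) ≤ S (a * b) := by
  rw [Subring.closure_le]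
  rintro x (⟨f, rfl⟩ | hx)
  · exact ⟨0, f, by simp⟩
  · rcases hx with rfl | rfl
    · exact inv_mem_S ha ⟨b, rfl⟩
    · exact inv_mem_S hb ⟨a, mul_comm a b⟩

end StmtAux

open StmtAux in
/-- `R' = R''₁₂ ∩ R''₁₃ ∩ R''₂₃` inside the localization: the subring `R''_{ij}` is
generated by (the image of) `R'` together with the inverses of the two sums `X_l + X_m`
other than `X_i + X_j`. -/
theorem stmt0 :
    (Subring.closure (Set.range (algebraMap Rp K) ∪ {(xk 0 + xk 2)⁻¹, (xk 1 + xk 2)⁻¹})) ⊓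
    (Subring.closure (Set.range (algebraMap Rp K) ∪ {(xk 0 + xk 1)⁻¹, (xk 2 + xk 1)⁻¹})) ⊓
    (Subring.closure (Set.range (algebraMap Rp K) ∪ {(xk 1 + xk 0)⁻¹, (xk 2 + xk 0)⁻¹})) =
    (algebraMap Rp K).range := by
  have hP0 : P ≠ 0 := primeP.ne_zero
  have hQ0 : Q ≠ 0 := primeQ.ne_zero
  have hR0 : Rr ≠ 0 := primeR.ne_zero
  have e02 : xk 0 + xk 2 = φ Q := (map_add φ _ _).symm
  have e12 : xk 1 + xk 2 = φ Rr := (map_add φ _ _).symm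
  have e01 : xk 0 + xk 1 = φ P := (map_add φ _ _).symm
  have e21 : xk 2 + xk 1 = φ Rr := by rw [← e12, add_comm]
  have e10 : xk 1 + xk 0 = φ P := by rw [← e01, add_comm]
  have e20 : xk 2 + xk 0 = φ Q := by rw [← e02, add_comm]
  apply le_antisymm
  · intro x hx
    obtain ⟨⟨hx1, hx2⟩, hx3⟩ := hx
    rw [e02, e12] at hx1
    rw [e01, e21] at hx2
    rw [e10, e20] at hx3
    obtain ⟨n, f, hf⟩ := mem_S (closure_le_S Q Rr hQ0 hR0 hx1)
    obtain ⟨m, g, hg⟩ := mem_S (closure_le_S P Rr hP0 hR0 hx2)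
    obtain ⟨k, h, hh⟩ := mem_S (closure_le_S P Q hP0 hQ0 hx3)
    -- cross equations in Rp
    have e1 : f * (P * Rr) ^ m = g * (Q * Rr) ^ n := by
      apply φ_inj
      rw [map_mul, map_mul, map_pow, map_pow, ← hf, ← hg]
      ring
    have e2 : f * (P * Q) ^ k = h * (Q * Rr) ^ n := by
      apply φ_inj
      rw [map_mul, map_mul, map_pow, map_pow, ← hf, ← hh]
      ring
    have hQnotPR : ¬ Q ∣ (P * Rr) ^ m := fun hd =>
      (primeQ.dvd_mul.mp (primeQ.dvd_of_dvd_pow hd)).elim Q_not_dvd_P Q_not_dvd_R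
    have hRnotPQ : ¬ Rr ∣ (P * Q) ^ k := fun hd =>
      (primeR.dvd_mul.mp (primeR.dvd_of_dvd_pow hd)).elim R_not_dvd_P R_not_dvd_Q
    have hQn : Q ^ n ∣ f := by
      refine primeQ.pow_dvd_of_dvd_mul_right n hQnotPR ?_
      rw [e1, mul_pow]
      exact ⟨g * Rr ^ n, by ring⟩
    have hRn : Rr ^ n ∣ f := by
      refine primeR.pow_dvd_of_dvd_mul_right n hRnotPQ ?_
      rw [e2, mul_pow]
      exact ⟨h * Q ^ n, by ring⟩
    obtain ⟨f1, rfl⟩ := hQn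
    have hRn' : Rr ^ n ∣ f1 := by
      exact primeR.pow_dvd_of_dvd_mul_left n
        (fun hd => R_not_dvd_Q (primeR.dvd_of_dvd_pow hd)) hRn
    obtain ⟨t, rfl⟩ := hRn'
    have hc : (φ (Q * Rr)) ^ n ≠ 0 := by
      apply pow_ne_zero
      exact fun hc => (mul_ne_zero hQ0 hR0) (φ_inj (by simpa using hc))
    have hx : x * (φ (Q * Rr)) ^ n = φ t * (φ (Q * Rr)) ^ n := by
      rw [hf, ← map_pow, ← map_mul]
      exact congrArg φ (by rw [mul_pow]; ring)
    exact ⟨t, (mul_right_cancel₀ hc hx).symm⟩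
  · refine le_inf (le_inf ?_ ?_) ?_ <;>
      · rintro x ⟨f, rfl⟩
        exact Subring.subset_closure (Or.inl ⟨f, rfl⟩)
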